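/- Let r > 0 and let f : ℂ → ℂ be holomorphic on the strip S(r) and bounded on S(r), and suppose f is not identically zero on S(r). Let z : ℕ → S(r) be an injective sequence with f(z_n) = 0 for all n, and write z_n = x_n + i y_n with x_n, y_n ∈ ℝ. Then the series Σ_{n ≥ 0} e^{π x_n/(2r)} cos(π y_n/(2r)) / ( (e^{π x_n/r} + 1)² − 4 e^{π x_n/r} cos²(π y_n/(2r)) )^{1/2} converges. -/

import Mathlib

/-- The horizontal strip `S(r) = {z ∈ ℂ : |Im z| < r}`. -/
def strip (r : ℝ) : Set ℂ := {z : ℂ | |z.im| < r}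

open Complex Metric Set Finset Filter Topology

section helpers

lemma key_normSq_identity (a w : ℂ) :
    Complex.normSq (1 - (starRingEnd ℂ) a * w) - Complex.normSq (w - a)
      = (1 - Complex.normSq a) * (1 - Complex.normSq w) := by
  simp only [Complex.normSq_apply, Complex.sub_re, Complex.sub_im, Complex.mul_re,
    Complex.mul_im, Complex.conj_re, Complex.conj_im, Complex.one_re, Complex.one_im]
  ring

lemma normSq_one_sub_conj_mul (a z : ℂ) :
    Complex.normSq (1 - (starRingEnd ℂ) a * z)
      = 1 - 2 * (a * (starRingEnd ℂ) z).re + Complex.normSq a * Complex.normSq z := by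
  rw [Complex.normSq_sub, Complex.normSq.map_one, map_mul]
  rw [Complex.normSq_conj]
  have : ((1:ℂ) * (starRingEnd ℂ) ((starRingEnd ℂ) a * z)).re = (a * (starRingEnd ℂ) z).re := by
    rw [one_mul, map_mul, Complex.conj_conj]
  rw [this]; ring

lemma normSq_sub' (a z : ℂ) :
    Complex.normSq (z - a) = Complex.normSq z - 2 * (a * (starRingEnd ℂ) z).re + Complex.normSq a := by
  rw [Complex.normSq_sub]
  have : ((z * (starRingEnd ℂ) a)).re = (a * (starRingEnd ℂ) z).re := by
    rw [← Complex.conj_conj (a * (starRingEnd ℂ) z), map_mul, Complex.conj_conj, Complex.conj_re, mul_comm]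
  rw [this]; ring

lemma mobius_circle_bound (a z : ℂ) (ρ : ℝ) (ha : ‖a‖ < ρ) (hρ : ρ < 1)
    (hz : ‖z‖ = ρ) :
    ‖1 - (starRingEnd ℂ) a * z‖ * (ρ - ‖a‖)
      ≤ (1 - ‖a‖ * ρ) * ‖z - a‖ := by
  set A := ‖a‖ with hAdef
  have hA : (0:ℝ) ≤ A := norm_nonneg a
  have hρ0 : (0:ℝ) < ρ := lt_of_le_of_lt hA ha
  set s := (a * (starRingEnd ℂ) z).re with hsdef
  have hs : s ≤ A * ρ := by
    calc s ≤ ‖a * (starRingEnd ℂ) z‖ := Complex.re_le_norm _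
    _ = A * ρ := by rw [norm_mul, Complex.norm_conj, hz]
  have e1 : ‖1 - (starRingEnd ℂ) a * z‖ ^ 2 = 1 - 2*s + A^2 * ρ^2 := by
    rw [Complex.sq_norm, normSq_one_sub_conj_mul, ← Complex.sq_norm, ← Complex.sq_norm, hz]
  have e2 : ‖z - a‖ ^ 2 = ρ^2 - 2*s + A^2 := by
    rw [Complex.sq_norm, normSq_sub', ← Complex.sq_norm, ← Complex.sq_norm, hz]
  have hb1 : (0:ℝ) ≤ 1 - A * ρ := by nlinarith
  have hb2 : (0:ℝ) ≤ ρ - A := by linarith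
  have habs1 : (0:ℝ) ≤ ‖1 - (starRingEnd ℂ) a * z‖ := norm_nonneg _
  have habs2 : (0:ℝ) ≤ ‖z - a‖ := norm_nonneg _
  have hsq : (‖1 - (starRingEnd ℂ) a * z‖ * (ρ - A))^2
      ≤ ((1 - A * ρ) * ‖z - a‖)^2 := by
    have hfac : (0:ℝ) ≤ ((1-ρ)*(1+A)*((1+ρ)*(1-A))) * (A*ρ - s) := by
      apply mul_nonneg
      · apply mul_nonneg (mul_nonneg (by linarith) (by linarith))
        exact mul_nonneg (by linarith) (by linarith)
      · linarith
    rw [mul_pow, mul_pow, e1, e2]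
    nlinarith [hfac]
  nlinarith [hsq, mul_nonneg habs1 hb2, mul_nonneg hb1 habs2]

-- base case: max modulus
lemma maxmod_ball (g : ℂ → ℂ) (M ρ : ℝ) (hρ0 : 0 < ρ)
    (hg : DifferentiableOn ℂ g (Metric.ball (0:ℂ) 1)) (hρ1 : ρ < 1)
    (hM : ∀ z ∈ Metric.sphere (0:ℂ) ρ, ‖g z‖ ≤ M)
    (w : ℂ) (hw : w ∈ Metric.closedBall (0:ℂ) ρ) : ‖g w‖ ≤ M := by
  have hcl : closure (Metric.ball (0:ℂ) ρ) = Metric.closedBall (0:ℂ) ρ :=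
    closure_ball (0:ℂ) hρ0.ne'
  have hd : DiffContOnCl ℂ g (Metric.ball (0:ℂ) ρ) := by
    apply DifferentiableOn.diffContOnCl
    rw [hcl]
    exact hg.mono (Metric.closedBall_subset_ball hρ1)
  have := Complex.norm_le_of_forall_mem_frontier_norm_le (isBounded_ball) hd
    (C := M) (fun z hz => by
      rw [frontier_ball (0:ℂ) hρ0.ne'] at hz
      exact hM z hz) (z := w) (by rw [hcl]; exact hw)
  simpa using this

lemma blaschke_finset (ρ : ℝ) (hρ0 : 0 < ρ) (hρ1 : ρ < 1) (F : Finset ℂ) :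
    ∀ (g : ℂ → ℂ) (M : ℝ), DifferentiableOn ℂ g (Metric.ball (0:ℂ) 1) →
    (∀ z ∈ Metric.sphere (0:ℂ) ρ, ‖g z‖ ≤ M) →
    (∀ a ∈ F, ‖a‖ < ρ) → (∀ a ∈ F, g a = 0) →
    ∀ w ∈ Metric.closedBall (0:ℂ) ρ,
      ‖g w‖ ≤ (M * ∏ a ∈ F, ((1 - ‖a‖ * ρ)/(ρ - ‖a‖)))
        * ∏ a ∈ F, ‖(w - a)/(1 - (starRingEnd ℂ) a * w)‖ := by
  induction F using Finset.induction_on with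
  | empty => intro g M hg hM _ _ w hw; simpa using maxmod_ball g M ρ hρ0 hg hρ1 hM w hw
  | @insert a F haF IH =>
    intro g M hg hM hFρ hF0 w hw
    have haρ : ‖a‖ < ρ := hFρ a (Finset.mem_insert_self a F)
    have ha1 : a ∈ Metric.ball (0:ℂ) 1 := by
      simp only [Metric.mem_ball, Complex.dist_eq, sub_zero]; exact haρ.trans hρ1
    have hga : g a = 0 := hF0 a (Finset.mem_insert_self a F)
    set g₁ : ℂ → ℂ := fun x => (1 - (starRingEnd ℂ) a * x) * dslope g a x with hg₁def
    have hg₁ : DifferentiableOn ℂ g₁ (Metric.ball (0:ℂ) 1) := by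
      apply DifferentiableOn.mul
      · exact (differentiableOn_const _).sub
          ((differentiable_id.const_mul _).differentiableOn)
      · exact (Complex.differentiableOn_dslope (isOpen_ball.mem_nhds ha1)).2 hg
    have hA : (0:ℝ) ≤ ‖a‖ := norm_nonneg a
    set c : ℝ := (1 - ‖a‖ * ρ)/(ρ - ‖a‖) with hcdef
    have hden : (0:ℝ) < ρ - ‖a‖ := by linarith
    have hnum : (0:ℝ) < 1 - ‖a‖ * ρ := by nlinarith
    have hc : 0 < c := div_pos hnum hden
    -- bound for g₁ on the sphere
    have hM₁ : ∀ x ∈ Metric.sphere (0:ℂ) ρ, ‖g₁ x‖ ≤ c * M := by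
      intro x hx
      have hxρ : ‖x‖ = ρ := by
        simpa [Complex.dist_eq] using hx
      have hxa : x ≠ a := by
        intro h; rw [h] at hxρ; exact absurd hxρ (ne_of_lt haρ)
      have hds : dslope g a x = (x - a)⁻¹ * g x := by
        rw [dslope_of_ne g hxa, slope_def_field, hga, sub_zero, div_eq_inv_mul]
      have hxa0 : ‖x - a‖ ≠ 0 := by
        simp only [ne_eq, norm_eq_zero, sub_eq_zero]; exact hxa
      have key := mobius_circle_bound a x ρ haρ hρ1 hxρ
      have hMx : ‖g x‖ ≤ M := hM x hx
      have hM0 : 0 ≤ M := le_trans (norm_nonneg _) hMx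
      have : ‖g₁ x‖ = ‖1 - (starRingEnd ℂ) a * x‖ / ‖x - a‖
          * ‖g x‖ := by
        rw [hg₁def]
        simp only [norm_mul, hds, norm_mul, norm_inv]
        field_simp
      rw [this]
      have h1 : ‖1 - (starRingEnd ℂ) a * x‖ / ‖x - a‖ ≤ c := by
        rw [div_le_iff₀ (lt_of_le_of_ne (norm_nonneg _) (Ne.symm hxa0)), hcdef]
        rw [div_mul_eq_mul_div, le_div_iff₀ hden]
        exact key
      exact mul_le_mul h1 hMx (norm_nonneg _) (le_of_lt hc)
    -- zeros of g₁ on F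
    have hF0₁ : ∀ b ∈ F, g₁ b = 0 := by
      intro b hb
      have hba : b ≠ a := fun h => haF (h ▸ hb)
      rw [hg₁def]
      simp only
      rw [dslope_of_ne g hba, slope_def_field, hga, hF0 b (Finset.mem_insert_of_mem hb), sub_zero]
      simp
    have IH' := IH g₁ (c * M) hg₁ hM₁ (fun b hb => hFρ b (Finset.mem_insert_of_mem hb))
      hF0₁ w hw
    -- recover bound for g
    have hgw : g w = (w - a) * dslope g a w := by
      have := sub_smul_dslope g a w
      rw [hga, sub_zero] at this
      rw [← this]; simp [smul_eq_mul]
    have h1aw : (1 : ℂ) - (starRingEnd ℂ) a * w ≠ 0 := by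
      intro h
      have habs : ‖(starRingEnd ℂ) a * w‖ < 1 := by
        rw [norm_mul, Complex.norm_conj]
        have hwρ : ‖w‖ ≤ ρ := by simpa [Complex.dist_eq] using hw
        calc ‖a‖ * ‖w‖ ≤ ‖a‖ * ρ :=
          mul_le_mul_of_nonneg_left hwρ hA
        _ < 1 := by nlinarith
      rw [sub_eq_zero] at h
      rw [← h] at habs
      simp at habs
    have hgw2 : ‖g w‖ = ‖(w - a)/(1 - (starRingEnd ℂ) a * w)‖
        * ‖g₁ w‖ := by
      rw [hgw, hg₁def]
      simp only [norm_mul, norm_div]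
      have hne : ‖1 - (starRingEnd ℂ) a * w‖ ≠ 0 :=
        fun h => h1aw (by rwa [norm_eq_zero] at h)
      field_simp
      rw [mul_comm w, mul_div_cancel_right₀ _ hne]
    rw [hgw2, Finset.prod_insert haF, Finset.prod_insert haF]
    have hBa : (0:ℝ) ≤ ‖(w - a)/(1 - (starRingEnd ℂ) a * w)‖ := norm_nonneg _
    refine le_trans (mul_le_mul_of_nonneg_left IH' hBa) (le_of_eq ?_)
    ring

lemma blaschke_ball (g : ℂ → ℂ) (M : ℝ) (hg : DifferentiableOn ℂ g (Metric.ball (0:ℂ) 1))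
    (hM : ∀ x ∈ Metric.ball (0:ℂ) 1, ‖g x‖ ≤ M) (F : Finset ℂ)
    (hF : ∀ a ∈ F, ‖a‖ < 1) (hF0 : ∀ a ∈ F, g a = 0)
    (w : ℂ) (hw : ‖w‖ < 1) :
    ‖g w‖ ≤ M * ∏ a ∈ F, ‖(w - a)/(1 - (starRingEnd ℂ) a * w)‖ := by
  have hw0 : (0:ℝ) ≤ ‖w‖ := norm_nonneg w
  have hev : ∀ᶠ ρ in 𝓝[<] (1:ℝ), ‖g w‖ ≤
      (M * ∏ a ∈ F, ((1 - ‖a‖ * ρ)/(ρ - ‖a‖)))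
        * ∏ a ∈ F, ‖(w - a)/(1 - (starRingEnd ℂ) a * w)‖ := by
    have h1 : ∀ᶠ ρ in 𝓝[<] (1:ℝ), ∀ a ∈ F, ‖a‖ < ρ := by
      rw [eventually_all_finset]
      intro a ha
      filter_upwards [Ioo_mem_nhdsLT_of_mem (b := (1:ℝ)) ⟨hF a ha, le_refl 1⟩] with ρ hρ
      exact hρ.1
    have h2 : ∀ᶠ ρ in 𝓝[<] (1:ℝ), ‖w‖ < ρ ∧ 0 < ρ ∧ ρ < 1 := by
      filter_upwards [Ioo_mem_nhdsLT_of_mem (b := (1:ℝ)) ⟨hw, le_refl 1⟩] with ρ hρ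
      exact ⟨hρ.1, lt_of_le_of_lt hw0 hρ.1, hρ.2⟩
    filter_upwards [h1, h2] with ρ hρ1 hρ2
    refine blaschke_finset ρ hρ2.2.1 hρ2.2.2 F g M hg ?_ hρ1 hF0 w ?_
    · intro x hx
      apply hM
      simp only [Metric.mem_sphere, Complex.dist_eq, sub_zero] at hx
      simp only [Metric.mem_ball, Complex.dist_eq, sub_zero]
      rw [hx]; exact hρ2.2.2
    · simp only [Metric.mem_closedBall, Complex.dist_eq, sub_zero]
      exact le_of_lt hρ2.1
  have hT : Filter.Tendsto (fun ρ : ℝ =>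
      (M * ∏ a ∈ F, ((1 - ‖a‖ * ρ)/(ρ - ‖a‖)))
        * ∏ a ∈ F, ‖(w - a)/(1 - (starRingEnd ℂ) a * w)‖)
      (𝓝[<] (1:ℝ))
      (𝓝 (M * ∏ a ∈ F, ‖(w - a)/(1 - (starRingEnd ℂ) a * w)‖)) := by
    have hprod : Filter.Tendsto (fun ρ : ℝ =>
        ∏ a ∈ F, ((1 - ‖a‖ * ρ)/(ρ - ‖a‖))) (𝓝[<] (1:ℝ)) (𝓝 1) := by
      have := tendsto_finset_prod (f := fun (a : ℂ) (ρ : ℝ) => (1 - ‖a‖ * ρ)/(ρ - ‖a‖))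
        (x := 𝓝[<] (1:ℝ)) (a := fun _ => (1:ℝ)) F (fun a ha => ?_)
      · simpa using this
      · have hne : (1:ℝ) - ‖a‖ ≠ 0 := by
          have := hF a ha; intro h; linarith
        have : Filter.Tendsto (fun ρ : ℝ => (1 - ‖a‖ * ρ)/(ρ - ‖a‖))
            (𝓝 (1:ℝ)) (𝓝 ((1 - ‖a‖ * 1)/(1 - ‖a‖))) := by
          apply Filter.Tendsto.div
          · exact ((continuous_const.sub ((continuous_mul_left (‖a‖)))).tendsto 1)
          · exact (continuous_id.sub continuous_const).tendsto 1
          · simpa using hne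
        rw [mul_one, div_self hne] at this
        exact this.mono_left nhdsWithin_le_nhds
    have := (tendsto_const_nhds (x := M).mul hprod).mul
      (tendsto_const_nhds (x := ∏ a ∈ F, ‖(w - a)/(1 - (starRingEnd ℂ) a * w)‖))
    simpa using this
  exact ge_of_tendsto hT hev

lemma blaschke_summable (g : ℂ → ℂ) (M : ℝ) (hg : DifferentiableOn ℂ g (Metric.ball (0:ℂ) 1))
    (hM : ∀ x ∈ Metric.ball (0:ℂ) 1, ‖g x‖ ≤ M)
    (a : ℕ → ℂ) (hainj : Function.Injective a) (ha : ∀ n, ‖a n‖ < 1)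
    (ha0 : ∀ n, g (a n) = 0) (w : ℂ) (hw : ‖w‖ < 1) (hgw : g w ≠ 0) :
    Summable (fun n => 1 - Complex.normSq (a n)) := by
  set t : ℕ → ℝ := fun n => ‖(w - a n)/(1 - (starRingEnd ℂ) (a n) * w)‖ with htdef
  have hMpos : 0 < M := lt_of_lt_of_le (by
      simpa [norm_pos_iff] using hgw) (hM w (by simpa [Complex.dist_eq] using hw))
  have hgw0 : 0 < ‖g w‖ := by simpa [norm_pos_iff] using hgw
  -- product lower bound over any finset of indices
  have hprod : ∀ s : Finset ℕ, ‖g w‖ / M ≤ ∏ n ∈ s, t n := by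
    intro s
    have himg := blaschke_ball g M hg hM (s.image a)
      (fun b hb => by
        obtain ⟨n, _, rfl⟩ := Finset.mem_image.1 hb
        exact ha n)
      (fun b hb => by
        obtain ⟨n, _, rfl⟩ := Finset.mem_image.1 hb
        exact ha0 n) w hw
    rw [Finset.prod_image (fun n _ m _ h => hainj h)] at himg
    rw [div_le_iff₀ hMpos, mul_comm]
    exact himg
  -- each t n is positive and ≤ 1
  have h1aw : ∀ n, (1:ℂ) - (starRingEnd ℂ) (a n) * w ≠ 0 := by
    intro n h
    have habs : ‖(starRingEnd ℂ) (a n) * w‖ < 1 := by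
      rw [norm_mul, Complex.norm_conj]
      calc ‖a n‖ * ‖w‖ ≤ ‖a n‖ * 1 :=
        mul_le_mul_of_nonneg_left (le_of_lt hw) (norm_nonneg _)
      _ < 1 := by simpa using ha n
    rw [sub_eq_zero] at h
    rw [← h] at habs
    simp at habs
  have htpos : ∀ n, 0 < t n := by
    intro n
    have := hprod {n}
    simp only [Finset.prod_singleton] at this
    exact lt_of_lt_of_le (div_pos hgw0 hMpos) this
  have htle : ∀ n, t n ≤ 1 := by
    intro n
    rw [htdef]
    simp only [norm_div]
    rw [div_le_one (norm_pos_iff.mpr (h1aw n))]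
    have hident := key_normSq_identity (a n) w
    have h1 : 0 ≤ (1 - Complex.normSq (a n)) * (1 - Complex.normSq w) := by
      apply mul_nonneg
      · have := ha n; rw [← Complex.sq_norm]; nlinarith [norm_nonneg (a n)]
      · rw [← Complex.sq_norm]; nlinarith [norm_nonneg w]
    have h2 : Complex.normSq (w - a n) ≤ Complex.normSq (1 - (starRingEnd ℂ) (a n) * w) := by
      linarith
    calc ‖w - a n‖ = Real.sqrt (Complex.normSq (w - a n)) := Complex.norm_def _
      _ ≤ Real.sqrt (Complex.normSq (1 - (starRingEnd ℂ) (a n) * w)) := Real.sqrt_le_sqrt h2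
      _ = ‖1 - (starRingEnd ℂ) (a n) * w‖ := (Complex.norm_def _).symm
  -- summability of 1 - t n
  set C : ℝ := Real.log M - Real.log (‖g w‖) with hCdef
  have hsum1 : Summable (fun n => 1 - t n) := by
    apply summable_of_sum_le (c := C)
    · intro n; simp only [Pi.zero_apply]; linarith [htle n]
    · intro s
      have hlog : Real.log (‖g w‖ / M) ≤ Real.log (∏ n ∈ s, t n) :=
        Real.log_le_log (div_pos hgw0 hMpos) (hprod s)
      rw [Real.log_div (ne_of_gt hgw0) (ne_of_gt hMpos), Real.log_prod
        (fun n _ => ne_of_gt (htpos n))] at hlog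
      have hbound : ∀ n ∈ s, 1 - t n ≤ -Real.log (t n) := by
        intro n _
        have := Real.log_le_sub_one_of_pos (htpos n)
        linarith
      calc ∑ n ∈ s, (1 - t n) ≤ ∑ n ∈ s, -Real.log (t n) := Finset.sum_le_sum hbound
        _ = -(∑ n ∈ s, Real.log (t n)) := by rw [Finset.sum_neg_distrib]
        _ ≤ C := by rw [hCdef]; linarith
  -- compare 1 - normSq (a n) with 1 - t n
  apply Summable.of_nonneg_of_le (f := fun n => (8 / (1 - Complex.normSq w)) * (1 - t n))
  · intro n
    have := ha n; rw [← Complex.sq_norm]; nlinarith [norm_nonneg (a n)]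
  · intro n
    have hwn : 0 < 1 - Complex.normSq w := by
      rw [← Complex.sq_norm]; nlinarith [norm_nonneg w]
    have hident := key_normSq_identity (a n) w
    have hB : Complex.normSq (1 - (starRingEnd ℂ) (a n) * w) ≤ 4 := by
      rw [← Complex.sq_norm]
      have : ‖1 - (starRingEnd ℂ) (a n) * w‖ ≤ 2 := by
        calc ‖1 - (starRingEnd ℂ) (a n) * w‖
            ≤ ‖(1:ℂ)‖ + ‖(starRingEnd ℂ) (a n) * w‖ := by
              simpa [sub_eq_add_neg] using norm_add_le (1:ℂ) (-((starRingEnd ℂ) (a n) * w))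
          _ ≤ 1 + 1 := by
              gcongr
              · simp
              · rw [norm_mul, Complex.norm_conj]
                nlinarith [ha n, hw, norm_nonneg (a n), norm_nonneg w]
          _ = 2 := by norm_num
      nlinarith [norm_nonneg (1 - (starRingEnd ℂ) (a n) * w)]
    -- t n ^ 2 relation
    have hBpos : 0 < Complex.normSq (1 - (starRingEnd ℂ) (a n) * w) := by
      rw [Complex.normSq_pos]; exact h1aw n
    have ht2 : t n ^ 2 * Complex.normSq (1 - (starRingEnd ℂ) (a n) * w)
        = Complex.normSq (w - a n) := by
      have hq : t n ^ 2 = Complex.normSq (w - a n) / Complex.normSq (1 - (starRingEnd ℂ) (a n) * w) := by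
        rw [htdef]
        simp only
        rw [Complex.sq_norm, Complex.normSq_div]
      rw [hq, div_mul_cancel₀ _ (ne_of_gt hBpos)]
    have hkey : (1 - Complex.normSq (a n)) * (1 - Complex.normSq w)
        = Complex.normSq (1 - (starRingEnd ℂ) (a n) * w) * (1 - t n ^ 2) := by
      linear_combination ht2 - hident
    have h1t2 : 0 ≤ 1 - t n ^ 2 := by nlinarith [htle n, htpos n]
    have hfin : (1 - Complex.normSq (a n)) * (1 - Complex.normSq w) ≤ 4 * (2 * (1 - t n)) := by
      calc (1 - Complex.normSq (a n)) * (1 - Complex.normSq w)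
          = Complex.normSq (1 - (starRingEnd ℂ) (a n) * w) * (1 - t n ^ 2) := hkey
        _ ≤ 4 * (1 - t n ^ 2) := by nlinarith [h1t2, hB, hBpos]
        _ ≤ 4 * (2 * (1 - t n)) := by nlinarith [htle n, htpos n]
    rw [div_mul_eq_mul_div, le_div_iff₀ hwn]
    linarith
  · exact hsum1.mul_left _


noncomputable def Phi (r : ℝ) (z : ℂ) : ℂ :=
  (Complex.exp ((Real.pi/(2*r) : ℝ) * z) - 1)/(Complex.exp ((Real.pi/(2*r) : ℝ) * z) + 1)

noncomputable def Psi (r : ℝ) (w : ℂ) : ℂ :=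
  ((2*r/Real.pi : ℝ) : ℂ) * Complex.log ((1 + w)/(1 - w))

lemma strip_isOpen (r : ℝ) : IsOpen (strip r) := by
  have : strip r = (fun z : ℂ => |z.im|) ⁻¹' (Set.Iio r) := rfl
  rw [this]
  exact (continuous_abs.comp Complex.continuous_im).isOpen_preimage _ isOpen_Iio

section maps
variable {r : ℝ}

lemma strip_im_bound (hr : 0 < r) {z : ℂ} (hz : z ∈ strip r) :
    |(((Real.pi/(2*r) : ℝ) : ℂ) * z).im| < Real.pi / 2 := by
  rw [Complex.im_ofReal_mul, abs_mul,
    abs_of_pos (by positivity : (0:ℝ) < Real.pi/(2*r))]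
  have hz' : |z.im| < r := hz
  calc Real.pi/(2*r) * |z.im| < Real.pi/(2*r) * r := by
        apply mul_lt_mul_of_pos_left hz' (by positivity)
    _ = Real.pi / 2 := by field_simp

lemma exp_re_pos (hr : 0 < r) {z : ℂ} (hz : z ∈ strip r) :
    0 < (Complex.exp (((Real.pi/(2*r) : ℝ) : ℂ) * z)).re := by
  rw [Complex.exp_re]
  apply mul_pos (Real.exp_pos _)
  apply Real.cos_pos_of_mem_Ioo
  have := strip_im_bound hr hz
  constructor <;> [linarith [abs_lt.1 this |>.1]; linarith [abs_lt.1 this |>.2]]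

lemma exp_add_one_ne (hr : 0 < r) {z : ℂ} (hz : z ∈ strip r) :
    Complex.exp (((Real.pi/(2*r) : ℝ) : ℂ) * z) + 1 ≠ 0 := by
  intro h
  have : (Complex.exp (((Real.pi/(2*r) : ℝ) : ℂ) * z) + 1).re = 0 := by rw [h]; rfl
  rw [Complex.add_re, Complex.one_re] at this
  linarith [exp_re_pos hr hz]

lemma abs_Phi_lt_one (hr : 0 < r) {z : ℂ} (hz : z ∈ strip r) : ‖Phi r z‖ < 1 := by
  set E := Complex.exp (((Real.pi/(2*r) : ℝ) : ℂ) * z) with hE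
  have hre : 0 < E.re := exp_re_pos hr hz
  have hne : E + 1 ≠ 0 := exp_add_one_ne hr hz
  have h1 : Complex.normSq (E - 1) < Complex.normSq (E + 1) := by
    rw [Complex.normSq_sub, Complex.normSq_add]
    have : (E * (starRingEnd ℂ) 1).re = E.re := by simp
    rw [this]
    simp only [Complex.normSq_one]
    linarith
  rw [Phi, norm_div, div_lt_one (norm_pos_iff.mpr hne)]
  rw [Complex.norm_def, Complex.norm_def]
  exact Real.sqrt_lt_sqrt (Complex.normSq_nonneg _) h1

lemma cayley_re_pos {w : ℂ} (hw : ‖w‖ < 1) :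
    0 < ((1 + w)/(1 - w)).re := by
  have h1w : (1 : ℂ) - w ≠ 0 := by
    intro h
    rw [sub_eq_zero] at h
    rw [← h] at hw
    simp at hw
  have hns : 0 < Complex.normSq (1 - w) := Complex.normSq_pos.2 h1w
  rw [Complex.div_re]
  have hre : (1 + w).re * (1 - w).re + (1 + w).im * (1 - w).im = 1 - Complex.normSq w := by
    simp only [Complex.add_re, Complex.add_im, Complex.sub_re, Complex.sub_im,
      Complex.one_re, Complex.one_im, Complex.normSq_apply]
    ring
  rw [← add_div]
  rw [hre]
  apply div_pos _ hns
  have : Complex.normSq w < 1 := by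
    rw [← Complex.sq_norm]; nlinarith [norm_nonneg w]
  linarith

lemma one_sub_ne {w : ℂ} (hw : ‖w‖ < 1) : (1 : ℂ) - w ≠ 0 := by
  intro h
  rw [sub_eq_zero] at h
  rw [← h] at hw
  simp at hw

lemma Psi_mem_strip (hr : 0 < r) {w : ℂ} (hw : ‖w‖ < 1) : Psi r w ∈ strip r := by
  have hre := cayley_re_pos hw
  have harg : |Complex.arg ((1 + w)/(1 - w))| < Real.pi / 2 :=
    Complex.abs_arg_lt_pi_div_two_iff.2 (Or.inl hre)
  have him : (Psi r w).im = (2*r/Real.pi) * Complex.arg ((1 + w)/(1 - w)) := by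
    rw [Psi]
    simp [Complex.mul_im, Complex.log_im]
  show |(Psi r w).im| < r
  rw [him, abs_mul, abs_of_pos (by
    have := Real.pi_pos
    positivity : (0:ℝ) < 2*r/Real.pi)]
  calc 2*r/Real.pi * |Complex.arg ((1 + w)/(1 - w))| < 2*r/Real.pi * (Real.pi/2) := by
        apply mul_lt_mul_of_pos_left harg (by
          have := Real.pi_pos
          positivity)
    _ = r := by
        field_simp

lemma Psi_differentiableAt {w : ℂ} (hw : ‖w‖ < 1) :
    DifferentiableAt ℂ (Psi r) w := by
  apply DifferentiableAt.const_mul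
  apply DifferentiableAt.clog
  · exact (differentiableAt_const _ |>.add differentiableAt_id).div
      (differentiableAt_const _ |>.sub differentiableAt_id) (one_sub_ne hw)
  · exact Complex.mem_slitPlane_iff.2 (Or.inl (cayley_re_pos hw))

lemma Psi_Phi (hr : 0 < r) {z : ℂ} (hz : z ∈ strip r) : Psi r (Phi r z) = z := by
  set E := Complex.exp (((Real.pi/(2*r) : ℝ) : ℂ) * z) with hE
  have hne : E + 1 ≠ 0 := exp_add_one_ne hr hz
  have hmoeb : (1 + Phi r z)/(1 - Phi r z) = E := by
    rw [Phi, ← hE]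
    have h1 : (1 : ℂ) - (E - 1)/(E + 1) = 2/(E + 1) := by field_simp; ring
    have h2 : (1 : ℂ) + (E - 1)/(E + 1) = 2*E/(E + 1) := by field_simp; ring
    rw [h1, h2]
    rw [div_div_div_eq]
    have h2ne : (2 : ℂ) ≠ 0 := two_ne_zero
    field_simp
  rw [Psi, hmoeb, hE]
  rw [Complex.log_exp]
  · rw [← mul_assoc, ← Complex.ofReal_mul]
    have : (2*r/Real.pi) * (Real.pi/(2*r)) = 1 := by
      field_simp [ne_of_gt Real.pi_pos, ne_of_gt hr]
    rw [this]
    simp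
  · have := strip_im_bound hr hz
    have h2 := abs_lt.1 this
    linarith [Real.pi_pos, h2.1]
  · have := strip_im_bound hr hz
    have h2 := abs_lt.1 this
    linarith [Real.pi_pos, h2.2]

end maps

variable {r : ℝ}

lemma exp_sq_eq (hr : 0 < r) (z : ℂ) :
    Real.exp (Real.pi * z.re / (2*r)) ^ 2 = Real.exp (Real.pi * z.re / r) := by
  rw [← Real.exp_nat_mul]
  congr 1
  push_cast
  field_simp

lemma normSq_exp_eq (hr : 0 < r) (z : ℂ) :
    Complex.normSq (Complex.exp (((Real.pi/(2*r) : ℝ) : ℂ) * z))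
      = Real.exp (Real.pi * z.re / r) := by
  rw [← Complex.sq_norm, Complex.norm_exp, Complex.re_ofReal_mul, ← exp_sq_eq hr z]
  congr 2
  ring

lemma exp_re_eq (z : ℂ) :
    (Complex.exp (((Real.pi/(2*r) : ℝ) : ℂ) * z)).re
      = Real.exp (Real.pi * z.re / (2*r)) * Real.cos (Real.pi * z.im / (2*r)) := by
  rw [Complex.exp_re, Complex.re_ofReal_mul, Complex.im_ofReal_mul]
  congr 2 <;> ring

lemma normSq_sub_one (E : ℂ) : Complex.normSq (E - 1) = Complex.normSq E + 1 - 2 * E.re := by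
  rw [Complex.normSq_sub]
  simp [Complex.normSq_one]

lemma normSq_add_one (E : ℂ) : Complex.normSq (E + 1) = Complex.normSq E + 1 + 2 * E.re := by
  rw [Complex.normSq_add]
  simp [Complex.normSq_one]

lemma denom_eq (hr : 0 < r) (z : ℂ) :
    (Real.exp (Real.pi * z.re / r) + 1)^2 -
        4 * Real.exp (Real.pi * z.re / r) * Real.cos (Real.pi * z.im / (2*r))^2
    = Complex.normSq (Complex.exp (((Real.pi/(2*r) : ℝ) : ℂ) * z) - 1) *
      Complex.normSq (Complex.exp (((Real.pi/(2*r) : ℝ) : ℂ) * z) + 1) := by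
  rw [normSq_sub_one, normSq_add_one, normSq_exp_eq hr z, exp_re_eq]
  have h2 := exp_sq_eq hr z
  nlinarith [h2]

lemma summand_eq (hr : 0 < r) (z : ℂ) :
    Real.exp (Real.pi * z.re / (2*r)) * Real.cos (Real.pi * z.im / (2*r)) /
      Real.sqrt ((Real.exp (Real.pi * z.re / r) + 1)^2 -
        4 * Real.exp (Real.pi * z.re / r) * Real.cos (Real.pi * z.im / (2*r))^2)
    = (Complex.exp (((Real.pi/(2*r) : ℝ) : ℂ) * z)).re /
      Real.sqrt (Complex.normSq (Complex.exp (((Real.pi/(2*r) : ℝ) : ℂ) * z) - 1) *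
                 Complex.normSq (Complex.exp (((Real.pi/(2*r) : ℝ) : ℂ) * z) + 1)) := by
  rw [denom_eq hr z, exp_re_eq]

lemma normSq_Phi_eq (hr : 0 < r) (z : ℂ) :
    Complex.normSq (Phi r z)
      = Complex.normSq (Complex.exp (((Real.pi/(2*r) : ℝ) : ℂ) * z) - 1) /
        Complex.normSq (Complex.exp (((Real.pi/(2*r) : ℝ) : ℂ) * z) + 1) := by
  rw [Phi, Complex.normSq_div]

lemma summand_le (hr : 0 < r) {z : ℂ} (hz : z ∈ strip r)
    (h14 : 1/4 ≤ Complex.normSq (Phi r z)) :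
    (Complex.exp (((Real.pi/(2*r) : ℝ) : ℂ) * z)).re /
      Real.sqrt (Complex.normSq (Complex.exp (((Real.pi/(2*r) : ℝ) : ℂ) * z) - 1) *
                 Complex.normSq (Complex.exp (((Real.pi/(2*r) : ℝ) : ℂ) * z) + 1))
      ≤ (1/2) * (1 - Complex.normSq (Phi r z)) := by
  set E : ℂ := Complex.exp (((Real.pi/(2*r) : ℝ) : ℂ) * z) with hE
  set A : ℝ := Complex.normSq (E - 1) with hA
  set B : ℝ := Complex.normSq (E + 1) with hB
  have hre : 0 < E.re := exp_re_pos hr hz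
  have hBpos : 0 < B := Complex.normSq_pos.2 (exp_add_one_ne hr hz)
  have hAnn : 0 ≤ A := Complex.normSq_nonneg _
  have hPhiEq : Complex.normSq (Phi r z) = A / B := normSq_Phi_eq hr z
  have hBA : B - A = 4 * E.re := by
    rw [hA, hB, normSq_sub_one, normSq_add_one]; ring
  have hAB4 : B / 4 ≤ A := by
    rw [hPhiEq, le_div_iff₀ hBpos] at h14
    linarith
  have hsqrt : B / 2 ≤ Real.sqrt (A * B) := by
    rw [Real.le_sqrt' (by linarith)]
    nlinarith [hBpos, hAB4]
  have hstep : E.re / Real.sqrt (A * B) ≤ E.re / (B / 2) :=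
    div_le_div_of_nonneg_left (le_of_lt hre) (by linarith) hsqrt
  refine hstep.trans (le_of_eq ?_)
  rw [hPhiEq]
  field_simp
  linear_combination (-1) * hBA

end helpers

theorem stmt5 (r : ℝ) (hr : 0 < r) (f : ℂ → ℂ)
    (hf : DifferentiableOn ℂ f (strip r))
    (hb : ∃ M : ℝ, ∀ z ∈ strip r, ‖f z‖ ≤ M)
    (hnz : ∃ z ∈ strip r, f z ≠ 0)
    (z : ℕ → ℂ) (hzinj : Function.Injective z)
    (hzs : ∀ n, z n ∈ strip r) (hzf : ∀ n, f (z n) = 0) :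
    Summable (fun n : ℕ =>
      Real.exp (Real.pi * (z n).re / (2*r)) * Real.cos (Real.pi * (z n).im / (2*r)) /
        Real.sqrt ((Real.exp (Real.pi * (z n).re / r) + 1)^2 -
          4 * Real.exp (Real.pi * (z n).re / r) * Real.cos (Real.pi * (z n).im / (2*r))^2)) := by
  classical
  obtain ⟨M, hM⟩ := hb
  obtain ⟨z₀, hz₀s, hz₀⟩ := hnz
  set g : ℂ → ℂ := fun w => f (Psi r w) with hgdef
  have hball : ∀ w : ℂ, w ∈ Metric.ball (0:ℂ) 1 → ‖w‖ < 1 := by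
    intro w hw; simpa [Complex.dist_eq] using hw
  have hgd : DifferentiableOn ℂ g (Metric.ball (0:ℂ) 1) := by
    intro w hw
    have hw' : ‖w‖ < 1 := hball w hw
    have hmem := Psi_mem_strip hr hw'
    have h1 : DifferentiableAt ℂ f (Psi r w) :=
      hf.differentiableAt ((strip_isOpen r).mem_nhds hmem)
    exact (h1.comp w (Psi_differentiableAt hw')).differentiableWithinAt
  have hgM : ∀ x ∈ Metric.ball (0:ℂ) 1, ‖g x‖ ≤ M := fun x hx =>
    hM _ (Psi_mem_strip hr (hball x hx))
  set a : ℕ → ℂ := fun n => Phi r (z n) with hadef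
  have ha : ∀ n, ‖a n‖ < 1 := fun n => abs_Phi_lt_one hr (hzs n)
  have hainj : Function.Injective a := by
    intro n m h
    apply hzinj
    have := congrArg (Psi r) h
    rwa [Psi_Phi hr (hzs n), Psi_Phi hr (hzs m)] at this
  have ha0 : ∀ n, g (a n) = 0 := by
    intro n
    show f (Psi r (Phi r (z n))) = 0
    rw [Psi_Phi hr (hzs n)]
    exact hzf n
  have hw₀ : ‖Phi r z₀‖ < 1 := abs_Phi_lt_one hr hz₀s
  have hgw₀ : g (Phi r z₀) ≠ 0 := by
    show f (Psi r (Phi r z₀)) ≠ 0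
    rw [Psi_Phi hr hz₀s]
    exact hz₀
  have hsum : Summable (fun n => 1 - Complex.normSq (a n)) :=
    blaschke_summable g M hgd hgM a hainj ha ha0 (Phi r z₀) hw₀ hgw₀
  have htend : Filter.Tendsto (fun n => 1 - Complex.normSq (a n)) atTop (nhds 0) :=
    hsum.tendsto_atTop_zero
  have hev : ∀ᶠ n in atTop, 1 - Complex.normSq (a n) < 3/4 :=
    htend.eventually (gt_mem_nhds (by norm_num))
  obtain ⟨N, hN⟩ := eventually_atTop.1 hev
  rw [← summable_nat_add_iff N]
  apply Summable.of_nonneg_of_le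
    (f := fun n => (1/2) * (1 - Complex.normSq (a (n + N))))
  · intro n
    rw [summand_eq hr (z (n + N))]
    apply div_nonneg (le_of_lt (exp_re_pos hr (hzs (n + N)))) (Real.sqrt_nonneg _)
  · intro n
    rw [summand_eq hr (z (n + N))]
    apply summand_le hr (hzs (n + N))
    have := hN (n + N) (Nat.le_add_left N n)
    have : 1 - Complex.normSq (Phi r (z (n + N))) < 3/4 := this
    linarith
  · exact ((summable_nat_add_iff N).2 hsum).mul_left _
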